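/- arXiv:2304.10169 — 4 statements merged into one kernel-verified Lean document; each statement's English description precedes it below -/
import Mathlib

section
/- For natural numbers n and m with m > n, the sum over ℓ from 1 to n of the ratio (n(n-1)⋯(n-ℓ+1))/(m(m-1)⋯(m-ℓ+1)) of falling factorials equals n/(m-n+1). -/
/-- Falling factorial sum identity: for `m > n`,
`∑_{ℓ=1}^{n} (n!/(n-ℓ)!)·((m-ℓ)!/m!) = n/(m-n+1)`. -/
theorem falling_factorial_sum (n m : ℕ) (h : m > n) :
    ∑ ℓ ∈ Finset.Icc 1 n,
      ((n.factorial : ℝ) / ((n - ℓ).factorial : ℝ)) *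
        (((m - ℓ).factorial : ℝ) / (m.factorial : ℝ))
      = (n : ℝ) / ((m : ℝ) - (n : ℝ) + 1) := by
  have hnm : (n : ℝ) < m := by exact_mod_cast h
  have hden : (m : ℝ) - n + 1 ≠ 0 := by nlinarith
  set f : ℕ → ℝ := fun ℓ =>
    ((n - ℓ : ℕ) : ℝ) * ((n.factorial : ℝ) / ((n - ℓ).factorial : ℝ)) *
      (((m - ℓ).factorial : ℝ) / (m.factorial : ℝ)) with hf
  have key : ∀ i ∈ Finset.range n,
      ((n.factorial : ℝ) / ((n - (1 + i)).factorial : ℝ)) *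
        (((m - (1 + i)).factorial : ℝ) / (m.factorial : ℝ))
        = (f i - f (i + 1)) / ((m : ℝ) - n + 1) := by
    intro i hi
    rw [Finset.mem_range] at hi
    have h1 : i + 1 ≤ n := hi
    have h2 : i + 1 ≤ m := le_of_lt (lt_of_le_of_lt h1 h)
    have hcn : ((n - (i + 1) : ℕ) : ℝ) = (n : ℝ) - ((i : ℝ) + 1) := by
      push_cast [Nat.cast_sub h1]; ring
    have hcm : ((m - (i + 1) : ℕ) : ℝ) = (m : ℝ) - ((i : ℝ) + 1) := by
      push_cast [Nat.cast_sub h2]; ring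
    have hcn' : ((n - i : ℕ) : ℝ) = (n : ℝ) - (i : ℝ) := by
      push_cast [Nat.cast_sub (le_of_lt hi)]; ring
    have hfn1 : ((n - i).factorial : ℝ) = ((n : ℝ) - i) * ((n - (i + 1)).factorial : ℝ) := by
      rw [show n - i = (n - (i + 1)) + 1 by omega, Nat.factorial_succ]
      push_cast [hcn]; ring
    have hfm1 : ((m - i).factorial : ℝ) = ((m : ℝ) - i) * ((m - (i + 1)).factorial : ℝ) := by
      rw [show m - i = (m - (i + 1)) + 1 by omega, Nat.factorial_succ]
      push_cast [hcm]; ring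
    have ha : ((n - (i + 1)).factorial : ℝ) ≠ 0 := by positivity
    have hb : ((m - (i + 1)).factorial : ℝ) ≠ 0 := by positivity
    have hc : ((m.factorial : ℝ)) ≠ 0 := by positivity
    have hni : (n : ℝ) - i ≠ 0 := by
      have : (i : ℝ) < n := by exact_mod_cast hi
      linarith
    rw [show 1 + i = i + 1 by omega, hf]
    simp only [hfn1, hfm1, hcn, hcm, hcn']
    field_simp
    ring
  rw [show Finset.Icc 1 n = Finset.Ico 1 (n + 1) by rw [Finset.Ico_add_one_right_eq_Icc],
    Finset.sum_Ico_eq_sum_range]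
  simp only [Nat.add_sub_cancel]
  rw [Finset.sum_congr rfl key, ← Finset.sum_div, Finset.sum_range_sub' f]
  have hf0 : f 0 = n := by
    simp [hf, Nat.factorial_ne_zero, div_self]
  have hfn : f n = 0 := by simp [hf]
  rw [hf0, hfn, sub_zero]
end

section
/- For natural numbers n and m with m > n, the weighted sum over ℓ from 1 to n of ℓ times the ratio of falling factorials (n(n-1)⋯(n-ℓ+1))/(m(m-1)⋯(m-ℓ+1)) equals n(m+1)/((m-n+1)(m-n+2)). -/
open Finset

private lemma Usum : ∀ n m : ℕ, n ≤ m →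
    ∑ k ∈ range (n+1), ((n.factorial : ℝ) / ((n - k).factorial : ℝ)) *
      (((m - k).factorial : ℝ) / (m.factorial : ℝ))
      = ((m : ℝ) + 1) / ((m : ℝ) - (n : ℝ) + 1) := by
  intro n
  induction n with
  | zero =>
    intro m _
    rw [Finset.sum_range_one]
    norm_num
    rw [div_self (Nat.cast_ne_zero.2 (Nat.factorial_ne_zero m) : (m.factorial:ℝ) ≠ 0),
      div_self (by positivity : (m:ℝ)+1 ≠ 0)]
  | succ n ih =>
    intro m hm
    obtain ⟨m', rfl⟩ : ∃ m', m = m' + 1 := ⟨m - 1, by omega⟩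
    have hm' : n ≤ m' := by omega
    rw [Finset.sum_range_succ']
    have key : ∀ k ∈ range (n+1),
        (((n+1).factorial : ℝ) / ((n + 1 - (k+1)).factorial : ℝ)) *
          (((m' + 1 - (k+1)).factorial : ℝ) / (((m'+1)).factorial : ℝ))
        = (((n:ℝ)+1)/((m':ℝ)+1)) * (((n.factorial : ℝ) / ((n - k).factorial : ℝ)) *
          (((m' - k).factorial : ℝ) / (m'.factorial : ℝ))) := by
      intro k hk
      have h1 : n + 1 - (k+1) = n - k := by omega
      have h2 : m' + 1 - (k+1) = m' - k := by omega
      rw [h1, h2, Nat.factorial_succ m', Nat.factorial_succ n]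
      have f1 : ((n-k).factorial : ℝ) ≠ 0 := Nat.cast_ne_zero.2 (Nat.factorial_ne_zero _)
      have f2 : (m'.factorial : ℝ) ≠ 0 := Nat.cast_ne_zero.2 (Nat.factorial_ne_zero _)
      have f3 : ((m':ℝ)+1) ≠ 0 := by positivity
      push_cast
      field_simp
    rw [Finset.sum_congr rfl key, ← Finset.mul_sum, ih m' hm']
    have h4 : (m':ℝ) - n + 1 ≠ 0 := by
      have : (n:ℝ) ≤ m' := by exact_mod_cast hm'
      nlinarith
    have f3 : ((m':ℝ)+1) ≠ 0 := by positivity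
    have f4 : (((n+1).factorial : ℝ)) ≠ 0 := Nat.cast_ne_zero.2 (Nat.factorial_ne_zero _)
    have f5 : (((m'+1).factorial : ℝ)) ≠ 0 := Nat.cast_ne_zero.2 (Nat.factorial_ne_zero _)
    simp only [Nat.sub_zero, div_self f4, div_self f5, one_mul]
    push_cast
    field_simp
    rw [show (m':ℝ) + 1 - ((n:ℝ) + 1) = (m':ℝ) - n by ring, eq_div_iff h4]
    ring

private lemma Ssum : ∀ n m : ℕ, n < m →
    ∑ k ∈ range (n+1), (k : ℝ) * (((n.factorial : ℝ) / ((n - k).factorial : ℝ)) *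
      (((m - k).factorial : ℝ) / (m.factorial : ℝ)))
      = (n : ℝ) * ((m : ℝ) + 1) /
          (((m : ℝ) - (n : ℝ) + 1) * ((m : ℝ) - (n : ℝ) + 2)) := by
  intro n
  induction n with
  | zero =>
    intro m _
    simp
  | succ n ih =>
    intro m hm
    obtain ⟨m', rfl⟩ : ∃ m', m = m' + 1 := ⟨m - 1, by omega⟩
    have hm' : n < m' := by omega
    rw [Finset.sum_range_succ']
    have key : ∀ k ∈ range (n+1),
        ((k+1 : ℕ) : ℝ) * ((((n+1).factorial : ℝ) / ((n + 1 - (k+1)).factorial : ℝ)) *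
          (((m' + 1 - (k+1)).factorial : ℝ) / (((m'+1)).factorial : ℝ)))
        = (((n:ℝ)+1)/((m':ℝ)+1)) *
          ((k : ℝ) * (((n.factorial : ℝ) / ((n - k).factorial : ℝ)) *
            (((m' - k).factorial : ℝ) / (m'.factorial : ℝ)))
          + ((n.factorial : ℝ) / ((n - k).factorial : ℝ)) *
            (((m' - k).factorial : ℝ) / (m'.factorial : ℝ))) := by
      intro k hk
      have h1 : n + 1 - (k+1) = n - k := by omega
      have h2 : m' + 1 - (k+1) = m' - k := by omega
      rw [h1, h2, Nat.factorial_succ m', Nat.factorial_succ n]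
      have f1 : ((n-k).factorial : ℝ) ≠ 0 := Nat.cast_ne_zero.2 (Nat.factorial_ne_zero _)
      have f2 : (m'.factorial : ℝ) ≠ 0 := Nat.cast_ne_zero.2 (Nat.factorial_ne_zero _)
      have f3 : ((m':ℝ)+1) ≠ 0 := by positivity
      push_cast
      field_simp
    rw [Finset.sum_congr rfl key, ← Finset.mul_sum, Finset.sum_add_distrib,
      ih m' hm', Usum n m' (le_of_lt hm')]
    have h4 : (m':ℝ) - n + 1 ≠ 0 := by
      have : (n:ℝ) ≤ m' := by exact_mod_cast le_of_lt hm'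
      nlinarith
    have h5 : (m':ℝ) - n ≠ 0 := by
      have : (n:ℝ) < m' := by exact_mod_cast hm'
      nlinarith
    have h6 : (m':ℝ) - n + 2 ≠ 0 := by
      have : (n:ℝ) ≤ m' := by exact_mod_cast le_of_lt hm'
      nlinarith
    have f3 : ((m':ℝ)+1) ≠ 0 := by positivity
    push_cast
    simp only [Nat.cast_zero, zero_mul, add_zero]
    field_simp
    rw [show (m':ℝ) + 1 - ((n:ℝ) + 1) = (m':ℝ) - n by ring, eq_div_iff (mul_ne_zero h4 h6)]
    ring

/-- Weighted falling factorial sum identity: for `m > n`,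
`∑_{ℓ=1}^{n} ℓ·(n!/(n-ℓ)!)·((m-ℓ)!/m!) = n(m+1)/((m-n+1)(m-n+2))`. -/
theorem weighted_falling_factorial_sum (n m : ℕ) (h : m > n) :
    ∑ ℓ ∈ Finset.Icc 1 n,
      (ℓ : ℝ) * (((n.factorial : ℝ) / ((n - ℓ).factorial : ℝ)) *
        (((m - ℓ).factorial : ℝ) / (m.factorial : ℝ)))
      = (n : ℝ) * ((m : ℝ) + 1) /
          (((m : ℝ) - (n : ℝ) + 1) * ((m : ℝ) - (n : ℝ) + 2)) := by
  rw [← Ssum n m h]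
  rw [Finset.range_eq_Ico, show Finset.Icc 1 n = Finset.Ico 1 (n+1) by rfl]
  rw [Finset.sum_eq_sum_Ico_succ_bot (by omega : 0 < n + 1)]
  simp
end

section
/- Let (X_t, Y_t) be the ARW particle-count chain on the complete graph with N+1 vertices and sleep rate λ>0. Given X_t = x, Y_t = y with 0 ≤ y ≤ x ≤ N, the conditional expectation of the one-step increment of S_t := Y_t − (1+λ)X_t + λN equals −λ/(1+λ) + (λ/(1+λ))·((N+1)/N)·(1/(N+2−x)) + (1/(1+λ))·((N+1)/N)·(x−y)/(N+3−x). -/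
open Finset

/-- `Π_k^{(0)}(x,y)`: probability that `ΔY ≥ k` and `ΔX = 0` for the ARW particle-count
chain on the complete graph with `N+1` vertices and sleep rate `lam`. -/
noncomputable def PiZero (N x y : ℕ) (lam : ℝ) (k : ℕ) : ℝ :=
  if k = 0 then
    (1 / (1 + lam)) * (((N : ℝ) + 1) / (N : ℝ)) *
      (((N : ℝ) + 1 - (x : ℝ)) / ((N : ℝ) + 2 - (x : ℝ)))
    - (1 / (1 + lam)) * (1 / (N : ℝ))
  else
    (1 / (1 + lam)) * (((N : ℝ) + 1) / (N : ℝ)) *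
      (∏ i ∈ Finset.range k, (((x : ℝ) - (y : ℝ) - (i : ℝ)) / ((N : ℝ) + 2 - (y : ℝ) - (i : ℝ)))) *
      (((N : ℝ) + 1 - (x : ℝ)) / ((N : ℝ) + 2 - (x : ℝ)))

/-- `Π_k^{(-1)}(x,y)`: probability that `ΔY ≥ k - 1` and `ΔX = -1` for the ARW
particle-count chain. -/
noncomputable def PiMinus (N x y : ℕ) (lam : ℝ) (k : ℕ) : ℝ :=
  (1 / (1 + lam)) * (((N : ℝ) + 1) / (N : ℝ)) *
    (∏ i ∈ Finset.range k, (((x : ℝ) - (y : ℝ) - (i : ℝ)) / ((N : ℝ) + 2 - (y : ℝ) - (i : ℝ)))) *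
    (1 / ((N : ℝ) + 2 - (x : ℝ)))

/-- `π_k^{(0)} = P(ΔY = k, ΔX = 0)` for `k ≥ 0`. -/
noncomputable def piZero (N x y : ℕ) (lam : ℝ) (k : ℕ) : ℝ :=
  PiZero N x y lam k - PiZero N x y lam (k + 1)

/-- `π_k^{(-1)} = P(ΔY = k - 1, ΔX = -1)` for `k ≥ 0`. -/
noncomputable def piMinus (N x y : ℕ) (lam : ℝ) (k : ℕ) : ℝ :=
  PiMinus N x y lam k - PiMinus N x y lam (k + 1)

private lemma weighted_telescope (f : ℕ → ℝ) (c : ℝ) (n : ℕ) :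
    ∑ k ∈ range n, (c + (k : ℝ)) * (f k - f (k + 1))
    = c * (f 0 - f n) + ((∑ k ∈ range n, f k) - f 0 - ((n : ℝ) - 1) * f n) := by
  induction n with
  | zero => simp
  | succ n ih =>
    rw [Finset.sum_range_succ, ih, Finset.sum_range_succ]
    push_cast
    ring

/-- Conditional expectation of the one-step increment of `S_t = Y_t - (1+λ)X_t + λN`
for the ARW particle-count chain, given `X_t = x`, `Y_t = y`: the increment equals
`λ + k` with probability `π_k^{(-1)}`, `k` with probability `π_k^{(0)}` (`k ≥ 0`), and
`-1` with probability `π_{-1}^{(0)} = λ/(1+λ)`. -/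
theorem ARW_drift_identity (N x y : ℕ) (lam : ℝ) (hlam : 0 < lam)
    (hN : 1 ≤ N) (hyx : y ≤ x) (hxN : x ≤ N) :
    (-1) * (lam / (1 + lam))
      + (∑ k ∈ Finset.range (x - y + 1), (lam + (k : ℝ)) * piMinus N x y lam k)
      + (∑ k ∈ Finset.range (x - y + 1), (k : ℝ) * piZero N x y lam k)
    = - lam / (1 + lam)
      + (lam / (1 + lam)) * (((N : ℝ) + 1) / (N : ℝ)) * (1 / ((N : ℝ) + 2 - (x : ℝ)))
      + (1 / (1 + lam)) * (((N : ℝ) + 1) / (N : ℝ)) *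
          (((x : ℝ) - (y : ℝ)) / ((N : ℝ) + 3 - (x : ℝ))) := by
  set m := x - y with hmdef
  have hNR : (1 : ℝ) ≤ (N : ℝ) := by exact_mod_cast hN
  have hxR : (x : ℝ) ≤ (N : ℝ) := by exact_mod_cast hxN
  have hyR : (y : ℝ) ≤ (x : ℝ) := by exact_mod_cast hyx
  have hN0 : (N : ℝ) ≠ 0 := by linarith
  have hlam1 : (1 : ℝ) + lam ≠ 0 := by linarith
  have hD2 : (N : ℝ) + 2 - x ≠ 0 := by intro h; linarith
  have hD3 : (N : ℝ) + 3 - x ≠ 0 := by intro h; linarith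
  have hmcast : (m : ℝ) = (x : ℝ) - y := by
    rw [hmdef]; push_cast [hyx]; ring
  set P : ℕ → ℝ :=
    fun k => ∏ i ∈ range k, (((x : ℝ) - y - i) / ((N : ℝ) + 2 - y - i)) with hPdef
  have hP0 : P 0 = 1 := by simp [hPdef]
  have hPsucc : ∀ k, P (k + 1) = P k * (((x : ℝ) - y - k) / ((N : ℝ) + 2 - y - k)) := by
    intro k; rw [hPdef]; exact Finset.prod_range_succ _ k
  have hPm1 : P (m + 1) = 0 := by
    refine Finset.prod_eq_zero (Finset.self_mem_range_succ m) ?_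
    rw [hmcast]
    simp
  clear_value P
  set f : ℕ → ℝ := fun k => P k * ((x : ℝ) - y - k) / ((N : ℝ) + 3 - x) with hfdef
  have key : ∑ k ∈ range m, P (k + 1) = (m : ℝ) / ((N : ℝ) + 3 - x) := by
    have step : ∀ k ∈ range m, P (k + 1) = f k - f (k + 1) := by
      intro k hk
      have hk' : (k : ℝ) < (m : ℝ) := by exact_mod_cast Finset.mem_range.mp hk
      rw [hmcast] at hk'
      have hB : (N : ℝ) + 2 - y - k ≠ 0 := by intro h; linarith
      rw [hfdef]
      simp only [hPsucc k]
      push_cast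
      field_simp
      ring
    calc ∑ k ∈ range m, P (k + 1) = ∑ k ∈ range m, (f k - f (k + 1)) :=
          Finset.sum_congr rfl step
      _ = f 0 - f m := Finset.sum_range_sub' f m
      _ = (m : ℝ) / ((N : ℝ) + 3 - x) := by
          rw [hfdef]
          simp only [hP0, Nat.cast_zero, sub_zero, one_mul]
          rw [hmcast]
          ring
  have Psum : ∑ k ∈ range (m + 1), P k = 1 + (m : ℝ) / ((N : ℝ) + 3 - x) := by
    rw [Finset.sum_range_succ' P m, key, hP0]; ring
  set cb : ℝ := (1 / (1 + lam)) * (((N : ℝ) + 1) / (N : ℝ)) *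
      (((N : ℝ) + 1 - x) / ((N : ℝ) + 2 - x)) with hcb
  set ca : ℝ := (1 / (1 + lam)) * (((N : ℝ) + 1) / (N : ℝ)) * (1 / ((N : ℝ) + 2 - x)) with hca
  set g : ℕ → ℝ := fun k => ca * P k with hgdef
  set h : ℕ → ℝ := fun k => cb * P k with hhdef
  have hpm : ∀ k, piMinus N x y lam k = g k - g (k + 1) := by
    intro k
    simp only [piMinus, PiMinus, hgdef, hca, hPdef]
    ring
  have h1 : ∑ k ∈ range (m + 1), (lam + (k : ℝ)) * piMinus N x y lam k
      = lam * (g 0 - g (m + 1)) + ((∑ k ∈ range (m + 1), g k) - g 0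
        - (((m + 1 : ℕ) : ℝ) - 1) * g (m + 1)) := by
    rw [← weighted_telescope g lam (m + 1)]
    exact Finset.sum_congr rfl fun k _ => by rw [hpm k]
  have hz : ∀ k ∈ range (m + 1), (k : ℝ) * piZero N x y lam k
      = ((0 : ℝ) + (k : ℝ)) * (h k - h (k + 1)) := by
    intro k _
    match k with
    | 0 => simp
    | (j + 1) =>
      have e1 : piZero N x y lam (j + 1) = h (j + 1) - h (j + 2) := by
        simp only [piZero, PiZero, if_neg (Nat.succ_ne_zero j),
          if_neg (Nat.succ_ne_zero (j + 1)), hhdef, hcb, hPdef]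
        ring
      rw [e1]; ring
  have h2 : ∑ k ∈ range (m + 1), (k : ℝ) * piZero N x y lam k
      = 0 * (h 0 - h (m + 1)) + ((∑ k ∈ range (m + 1), h k) - h 0
        - (((m + 1 : ℕ) : ℝ) - 1) * h (m + 1)) := by
    rw [← weighted_telescope h 0 (m + 1)]
    exact Finset.sum_congr rfl hz
  have hgsum : ∑ k ∈ range (m + 1), g k = ca * (1 + (m : ℝ) / ((N : ℝ) + 3 - x)) := by
    rw [hgdef]; simp only []
    rw [← Finset.mul_sum, Psum]
  have hhsum : ∑ k ∈ range (m + 1), h k = cb * (1 + (m : ℝ) / ((N : ℝ) + 3 - x)) := by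
    rw [hhdef]; simp only []
    rw [← Finset.mul_sum, Psum]
  have hg0 : g 0 = ca := by rw [hgdef]; simp [hP0]
  have hgm : g (m + 1) = 0 := by rw [hgdef]; simp [hPm1]
  have hh0 : h 0 = cb := by rw [hhdef]; simp [hP0]
  have hhm : h (m + 1) = 0 := by rw [hhdef]; simp [hPm1]
  rw [h1, h2, hgsum, hhsum, hg0, hgm, hh0, hhm, hca, hcb, hmcast]
  have hab : (1 : ℝ) / ((N : ℝ) + 2 - x) + ((N : ℝ) + 1 - x) / ((N : ℝ) + 2 - x) = 1 := by
    rw [← add_div]; field_simp; ring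
  linear_combination ((1 / (1 + lam)) * (((N : ℝ) + 1) / N) *
    (((x : ℝ) - y) / ((N : ℝ) + 3 - x))) * hab
end

section
/- For a birth-and-death chain on {−K−1, …, K⁺+1} with ratio of down-to-up probabilities at site k equal to exp(w_k) where w_k = (1/λ)(k+3/2)N^{−1/4} (up to uniformly small multiplicative corrections e^{O(MN^{−3/8})}), the effective resistance from −K−1 to K⁺+1 satisfies R = Θ(1)·(N^{1/8}/(K⁺N^{−1/8}))·exp((1/(2λ))(K⁺N^{−1/8})²·(1+o(1))) when K⁺·N^{−1/8} → ∞, via comparison of the Riemann sum ∑_p N^{−1/8}exp((1/(2λ))(pN^{−1/8})(pN^{−1/8}+1)) with the integral ∫ exp((1/(2λ))x(x+1))dx and the substitution y = (x+1/2)/√(2λ) reducing it to ∫e^{y²}dy ∼ e^{L²}/(2L). -/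
open Filter Finset

set_option maxHeartbeats 1600000

private lemma aux_inv : Tendsto (fun t : ℝ => 1 / t) atTop (nhds 0) := by
  simpa only [one_div] using (tendsto_inv_atTop_zero (𝕜 := ℝ))

private lemma aux_inv2 : Tendsto (fun t : ℝ => 1 / t ^ 2) atTop (nhds 0) := by
  have := aux_inv.mul aux_inv
  rw [mul_zero] at this
  refine this.congr (fun t => ?_)
  rw [div_mul_div_comm, one_mul, sq]

private lemma aux_log_sq_div : Tendsto (fun t : ℝ => Real.log t / t ^ 2) atTop (nhds 0) := by
  have h1 : Tendsto (fun t : ℝ => Real.log t / t) atTop (nhds 0) :=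
    Real.isLittleO_log_id_atTop.tendsto_div_nhds_zero
  have := h1.mul aux_inv
  rw [mul_zero] at this
  refine this.congr (fun t => ?_)
  rw [div_mul_div_comm, mul_one, sq]

private lemma aux_g_tendsto (a b : ℝ) :
    Tendsto (fun t : ℝ => a * Real.log (4 * t ^ 2) / t ^ 2 + 2 / t + b / t ^ 2)
      atTop (nhds 0) := by
  have hfinal : Tendsto (fun t : ℝ =>
      a * Real.log 4 * (1 / t ^ 2) + 2 * a * (Real.log t / t ^ 2) + 2 * (1 / t) + b * (1 / t ^ 2))
      atTop (nhds 0) := by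
    have := (((aux_inv2.const_mul (a * Real.log 4)).add (aux_log_sq_div.const_mul (2 * a))).add
      (aux_inv.const_mul 2)).add (aux_inv2.const_mul b)
    simpa using this
  refine hfinal.congr' ?_
  filter_upwards [eventually_ge_atTop (1 : ℝ)] with t ht
  have ht0 : t ≠ 0 := by positivity
  rw [Real.log_mul (by norm_num) (by positivity), Real.log_pow]
  push_cast
  ring

/-- Effective-resistance asymptotics for the coarse-grained birth-and-death chain: if
`R n = ∑_{p=-K⁻-1}^{K⁺} exp((1/(2λ))(p n^{-1/8})(p n^{-1/8}+1) + B_{n,p})` with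
uniformly small corrections `|B_{n,p}| ≤ C₀ n^{-1/8}`, `K⁻ ≤ n^{1/8}`, and
`K⁺ n^{-1/8} → ∞`, then
`R n = Θ(1)·(n^{1/8}/(K⁺ n^{-1/8}))·exp((1/(2λ))(K⁺ n^{-1/8})²(1+o(1)))`. -/
theorem effective_resistance_asymptotics (lam : ℝ) (hlam : 0 < lam)
    (C₀ : ℝ) (hC₀ : 0 < C₀)
    (Kminus Kplus : ℕ → ℕ) (B : ℕ → ℤ → ℝ) (R : ℕ → ℝ)
    (hB : ∀ n : ℕ, ∀ p : ℤ, |B n p| ≤ C₀ * (n : ℝ) ^ (-(1 : ℝ) / 8))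
    (hR : ∀ n : ℕ, R n = ∑ p ∈ Finset.Icc (-(Kminus n : ℤ) - 1) ((Kplus n : ℤ)),
        Real.exp ((1 / (2 * lam)) * ((p : ℝ) * (n : ℝ) ^ (-(1 : ℝ) / 8)) *
            ((p : ℝ) * (n : ℝ) ^ (-(1 : ℝ) / 8) + 1) + B n p))
    (hKminus : ∀ n : ℕ, (Kminus n : ℝ) ≤ (n : ℝ) ^ ((1 : ℝ) / 8))
    (hKplus : Tendsto (fun n : ℕ => (Kplus n : ℝ) * (n : ℝ) ^ (-(1 : ℝ) / 8))
        atTop atTop) :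
    ∃ ε : ℕ → ℝ, Tendsto ε atTop (nhds 0) ∧
      ∃ c C : ℝ, 0 < c ∧ 0 < C ∧
        ∀ᶠ n : ℕ in atTop,
          c * ((n : ℝ) ^ ((1 : ℝ) / 8) / ((Kplus n : ℝ) * (n : ℝ) ^ (-(1 : ℝ) / 8)) *
                Real.exp ((1 / (2 * lam)) *
                  ((Kplus n : ℝ) * (n : ℝ) ^ (-(1 : ℝ) / 8)) ^ 2 * (1 + ε n))) ≤ R n ∧
          R n ≤ C * ((n : ℝ) ^ ((1 : ℝ) / 8) / ((Kplus n : ℝ) * (n : ℝ) ^ (-(1 : ℝ) / 8)) *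
                Real.exp ((1 / (2 * lam)) *
                  ((Kplus n : ℝ) * (n : ℝ) ^ (-(1 : ℝ) / 8)) ^ 2 * (1 + ε n))) := by
  classical
  have hRpos : ∀ n, 0 < R n := by
    intro n
    rw [hR n]
    refine Finset.sum_pos (fun p _ => Real.exp_pos _) ⟨0, ?_⟩
    simp only [Finset.mem_Icc]
    constructor
    · have : (0 : ℤ) ≤ (Kminus n : ℤ) := Int.ofNat_nonneg _
      omega
    · exact Int.ofNat_nonneg _
  -- master bounds on log (R n)
  have master : ∀ n : ℕ, 1 ≤ n → 2 ≤ (Kplus n : ℝ) * (n : ℝ) ^ (-(1 : ℝ) / 8) →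
      (Real.log ((n : ℝ) ^ ((1 : ℝ) / 8) / ((Kplus n : ℝ) * (n : ℝ) ^ (-(1 : ℝ) / 8))) +
          ((Kplus n : ℝ) * (n : ℝ) ^ (-(1 : ℝ) / 8)) ^ 2 / (2 * lam) - (1 / lam + C₀)
        ≤ Real.log (R n)) ∧
      (Real.log (R n) ≤
        Real.log ((n : ℝ) ^ ((1 : ℝ) / 8) / ((Kplus n : ℝ) * (n : ℝ) ^ (-(1 : ℝ) / 8))) +
          Real.log (4 * ((Kplus n : ℝ) * (n : ℝ) ^ (-(1 : ℝ) / 8)) ^ 2) +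
          (((Kplus n : ℝ) * (n : ℝ) ^ (-(1 : ℝ) / 8)) ^ 2 +
            2 * ((Kplus n : ℝ) * (n : ℝ) ^ (-(1 : ℝ) / 8))) / (2 * lam) + C₀) := by
    intro n hn hL2
    have hn0 : (0 : ℝ) < (n : ℝ) := by exact_mod_cast hn
    have hn1 : (1 : ℝ) ≤ (n : ℝ) := by exact_mod_cast hn
    set ν : ℝ := (n : ℝ) ^ (-(1 : ℝ) / 8) with hνdef
    set μ : ℝ := (n : ℝ) ^ ((1 : ℝ) / 8) with hμdef
    have hν : 0 < ν := Real.rpow_pos_of_pos hn0 _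
    have hμ : 0 < μ := Real.rpow_pos_of_pos hn0 _
    have hνμ : ν * μ = 1 := by
      rw [hνdef, hμdef, ← Real.rpow_add hn0]; norm_num
    have hν1 : ν ≤ 1 := by
      rw [hνdef, show (1 : ℝ) = (n : ℝ) ^ (0 : ℝ) from (Real.rpow_zero _).symm]
      exact Real.rpow_le_rpow_of_exponent_le hn1 (by norm_num)
    have hμ1 : 1 ≤ μ := by
      rw [hμdef, show (1 : ℝ) = (n : ℝ) ^ (0 : ℝ) from (Real.rpow_zero _).symm]
      exact Real.rpow_le_rpow_of_exponent_le hn1 (by norm_num)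
    set LL : ℝ := (Kplus n : ℝ) * ν with hLdef
    have hL0 : 0 < LL := by linarith
    have hKμ : LL * μ = (Kplus n : ℝ) := by
      rw [hLdef, mul_assoc, hνμ, mul_one]
    have hApos : 0 < μ / LL := div_pos hμ hL0
    have hlam2 : 0 < 2 * lam := by linarith
    -- lower bound
    constructor
    · set m : ℕ := ⌊μ / LL⌋₊ with hmdef
      have hmle : (m : ℝ) ≤ μ / LL := Nat.floor_le hApos.le
      have hm1 : μ / LL ≤ (m : ℝ) + 1 := (Nat.lt_floor_add_one _).le
      have hmK : (m : ℤ) ≤ (Kplus n : ℤ) := by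
        have h1 : (m : ℝ) ≤ (Kplus n : ℝ) := by
          have h2 : μ / LL ≤ μ := div_le_self hμ.le (by linarith)
          have h3 : μ ≤ (Kplus n : ℝ) := by nlinarith
          linarith
        exact_mod_cast h1
      have hmν : (m : ℝ) * ν ≤ 1 / LL := by
        have := mul_le_mul_of_nonneg_right hmle hν.le
        calc (m : ℝ) * ν ≤ μ / LL * ν := this
          _ = 1 / LL := by field_simp; linarith [hνμ, mul_comm ν μ]
      have hsub : Finset.Icc ((Kplus n : ℤ) - m) (Kplus n : ℤ) ⊆
          Finset.Icc (-(Kminus n : ℤ) - 1) (Kplus n : ℤ) := by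
        apply Finset.Icc_subset_Icc _ le_rfl
        have : (0 : ℤ) ≤ (Kminus n : ℤ) := Int.ofNat_nonneg _
        omega
      have hterm : ∀ p ∈ Finset.Icc ((Kplus n : ℤ) - m) (Kplus n : ℤ),
          Real.exp (LL ^ 2 / (2 * lam) - 1 / lam - C₀) ≤
          Real.exp ((1 / (2 * lam)) * ((p : ℝ) * ν) * ((p : ℝ) * ν + 1) + B n p) := by
        intro p hp
        rw [Finset.mem_Icc] at hp
        apply Real.exp_le_exp.mpr
        have hpl : ((Kplus n : ℤ) - m : ℤ) ≤ p := hp.1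
        have hpl' : (Kplus n : ℝ) - m ≤ (p : ℝ) := by exact_mod_cast hpl
        have hx : LL - 1 / LL ≤ (p : ℝ) * ν := by
          have := mul_le_mul_of_nonneg_right hpl' hν.le
          have hKν : (Kplus n : ℝ) * ν = LL := rfl
          nlinarith
        have h1LL : 1 / LL ≤ 1 := by rw [div_le_one hL0]; linarith
        have hposL : (0:ℝ) ≤ LL - 1 / LL := by linarith
        have hx0 : 0 ≤ (p : ℝ) * ν := le_trans hposL hx
        have hLLinv : LL * (1 / LL) = 1 := by field_simp
        have hxx : LL ^ 2 - 2 ≤ ((p : ℝ) * ν) * ((p : ℝ) * ν + 1) := by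
          have h4 : (LL - 1 / LL) ^ 2 ≤ ((p : ℝ) * ν) ^ 2 := pow_le_pow_left₀ hposL hx 2
          have h5 : LL ^ 2 - 2 ≤ (LL - 1 / LL) ^ 2 := by
            nlinarith [sq_nonneg (1 / LL)]
          nlinarith
        have hBl : -(C₀ * ν) ≤ B n p := by
          have := hB n p
          rw [abs_le] at this
          exact this.1
        have hmul := mul_le_mul_of_nonneg_left hxx (by positivity : (0:ℝ) ≤ 1 / (2 * lam))
        have hexp : (1 / (2 * lam)) * (LL ^ 2 - 2) = LL ^ 2 / (2 * lam) - 1 / lam := by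
          field_simp
        have hCν : C₀ * ν ≤ C₀ := by nlinarith
        calc LL ^ 2 / (2 * lam) - 1 / lam - C₀
            = (1 / (2 * lam)) * (LL ^ 2 - 2) - C₀ := by rw [hexp]
          _ ≤ (1 / (2 * lam)) * (((p : ℝ) * ν) * ((p : ℝ) * ν + 1)) - C₀ * ν := by
              rw [mul_assoc] at hmul ⊢; linarith
          _ = (1 / (2 * lam)) * ((p : ℝ) * ν) * ((p : ℝ) * ν + 1) + (-(C₀ * ν)) := by ring
          _ ≤ (1 / (2 * lam)) * ((p : ℝ) * ν) * ((p : ℝ) * ν + 1) + B n p := by linarith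
      have hcard : (Finset.Icc ((Kplus n : ℤ) - m) (Kplus n : ℤ)).card = m + 1 := by
        rw [Int.card_Icc]
        omega
      have hsumR : ((m : ℝ) + 1) * Real.exp (LL ^ 2 / (2 * lam) - 1 / lam - C₀) ≤ R n := by
        rw [hR n]
        calc ((m : ℝ) + 1) * Real.exp (LL ^ 2 / (2 * lam) - 1 / lam - C₀)
            = ∑ _p ∈ Finset.Icc ((Kplus n : ℤ) - m) (Kplus n : ℤ),
                Real.exp (LL ^ 2 / (2 * lam) - 1 / lam - C₀) := by
              rw [Finset.sum_const, hcard, nsmul_eq_mul]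
              push_cast
              ring
          _ ≤ ∑ p ∈ Finset.Icc ((Kplus n : ℤ) - m) (Kplus n : ℤ),
                Real.exp ((1 / (2 * lam)) * ((p : ℝ) * ν) * ((p : ℝ) * ν + 1) + B n p) :=
              Finset.sum_le_sum hterm
          _ ≤ ∑ p ∈ Finset.Icc (-(Kminus n : ℤ) - 1) (Kplus n : ℤ),
                Real.exp ((1 / (2 * lam)) * ((p : ℝ) * ν) * ((p : ℝ) * ν + 1) + B n p) :=
              Finset.sum_le_sum_of_subset_of_nonneg hsub (fun _ _ _ => (Real.exp_pos _).le)
      have hAle : μ / LL * Real.exp (LL ^ 2 / (2 * lam) - 1 / lam - C₀) ≤ R n := by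
        have := mul_le_mul_of_nonneg_right hm1 (Real.exp_pos (LL ^ 2 / (2 * lam) - 1 / lam - C₀)).le
        linarith
      have hlog := Real.log_le_log (by positivity) hAle
      rw [Real.log_mul (ne_of_gt hApos) (Real.exp_ne_zero _), Real.log_exp] at hlog
      linarith
    · -- upper bound
      have hub : ∀ p ∈ Finset.Icc (-(Kminus n : ℤ) - 1) (Kplus n : ℤ),
          Real.exp ((1 / (2 * lam)) * ((p : ℝ) * ν) * ((p : ℝ) * ν + 1) + B n p) ≤
          Real.exp ((LL ^ 2 + 2 * LL) / (2 * lam) + C₀) := by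
        intro p hp
        rw [Finset.mem_Icc] at hp
        apply Real.exp_le_exp.mpr
        have hpu : (p : ℝ) ≤ (Kplus n : ℝ) := by exact_mod_cast hp.2
        have hpl : (-(Kminus n : ℝ) - 1) ≤ (p : ℝ) := by exact_mod_cast hp.1
        have hxu : (p : ℝ) * ν ≤ LL := by
          have := mul_le_mul_of_nonneg_right hpu hν.le
          exact this
        have hxl : -2 ≤ (p : ℝ) * ν := by
          have h1 : -(μ) - 1 ≤ (p : ℝ) := by linarith [hKminus n]
          have h2 : (-(μ) - 1) * ν ≤ (p : ℝ) * ν := mul_le_mul_of_nonneg_right h1 hν.le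
          have h3 : (-(μ) - 1) * ν = -(μ * ν) - ν := by ring
          have h4 : μ * ν = 1 := by rw [mul_comm]; exact hνμ
          nlinarith
        have hxx : ((p : ℝ) * ν) * ((p : ℝ) * ν + 1) ≤ LL ^ 2 + 2 * LL := by
          nlinarith [mul_nonneg (sub_nonneg.mpr hxu) (by nlinarith : (0:ℝ) ≤ LL + 1 + (p : ℝ) * ν)]
        have hBu : B n p ≤ C₀ * ν := (abs_le.mp (hB n p)).2
        have hmul := mul_le_mul_of_nonneg_left hxx (by positivity : (0:ℝ) ≤ 1 / (2 * lam))
        have hCν : C₀ * ν ≤ C₀ := by nlinarith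
        calc (1 / (2 * lam)) * ((p : ℝ) * ν) * ((p : ℝ) * ν + 1) + B n p
            ≤ (1 / (2 * lam)) * (LL ^ 2 + 2 * LL) + C₀ := by
              rw [mul_assoc]; linarith
          _ = (LL ^ 2 + 2 * LL) / (2 * lam) + C₀ := by ring
      have hcard : ((Finset.Icc (-(Kminus n : ℤ) - 1) (Kplus n : ℤ)).card : ℝ) =
          (Kminus n : ℝ) + (Kplus n : ℝ) + 2 := by
        rw [Int.card_Icc]
        have : ((Kplus n : ℤ) + 1 - (-(Kminus n : ℤ) - 1)).toNat = Kminus n + Kplus n + 2 := by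
          omega
        rw [this]
        push_cast
        ring
      have hcard4 : ((Finset.Icc (-(Kminus n : ℤ) - 1) (Kplus n : ℤ)).card : ℝ) ≤ 4 * LL * μ := by
        rw [hcard]
        have h3 : (Kplus n : ℝ) = LL * μ := hKμ.symm
        nlinarith [hKminus n]
      have hsumR : R n ≤ 4 * LL * μ * Real.exp ((LL ^ 2 + 2 * LL) / (2 * lam) + C₀) := by
        rw [hR n]
        calc ∑ p ∈ Finset.Icc (-(Kminus n : ℤ) - 1) (Kplus n : ℤ),
              Real.exp ((1 / (2 * lam)) * ((p : ℝ) * ν) * ((p : ℝ) * ν + 1) + B n p)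
            ≤ (Finset.Icc (-(Kminus n : ℤ) - 1) (Kplus n : ℤ)).card •
                Real.exp ((LL ^ 2 + 2 * LL) / (2 * lam) + C₀) :=
              Finset.sum_le_card_nsmul _ _ _ hub
          _ = ((Finset.Icc (-(Kminus n : ℤ) - 1) (Kplus n : ℤ)).card : ℝ) *
                Real.exp ((LL ^ 2 + 2 * LL) / (2 * lam) + C₀) := by
              rw [nsmul_eq_mul]
          _ ≤ 4 * LL * μ * Real.exp ((LL ^ 2 + 2 * LL) / (2 * lam) + C₀) :=
              mul_le_mul_of_nonneg_right hcard4 (Real.exp_pos _).le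
      have heq : 4 * LL * μ * Real.exp ((LL ^ 2 + 2 * LL) / (2 * lam) + C₀) =
          μ / LL * ((4 * LL ^ 2) * Real.exp ((LL ^ 2 + 2 * LL) / (2 * lam) + C₀)) := by
        field_simp
      have hlog := Real.log_le_log (hRpos n) (heq ▸ hsumR)
      rw [Real.log_mul (ne_of_gt hApos) (by positivity),
        Real.log_mul (by positivity) (Real.exp_ne_zero _), Real.log_exp] at hlog
      linarith
  -- the epsilon function
  refine ⟨fun n => 2 * lam / ((Kplus n : ℝ) * (n : ℝ) ^ (-(1 : ℝ) / 8)) ^ 2 *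
      (Real.log (R n) -
        Real.log ((n : ℝ) ^ ((1 : ℝ) / 8) / ((Kplus n : ℝ) * (n : ℝ) ^ (-(1 : ℝ) / 8)))) - 1,
    ?_, 1, 1, one_pos, one_pos, ?_⟩
  · -- tendsto 0
    have hg := (aux_g_tendsto (2 * lam) (2 + 2 * lam * C₀)).comp hKplus
    apply squeeze_zero_norm' _ hg
    filter_upwards [hKplus.eventually_ge_atTop 2, eventually_ge_atTop 1] with n hL2 hn1
    simp only [Function.comp]
    set LL : ℝ := (Kplus n : ℝ) * (n : ℝ) ^ (-(1 : ℝ) / 8) with hLdef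
    set D : ℝ := Real.log (R n) -
      Real.log ((n : ℝ) ^ ((1 : ℝ) / 8) / ((Kplus n : ℝ) * (n : ℝ) ^ (-(1 : ℝ) / 8))) with hDdef
    have hL0 : (0:ℝ) < LL := by linarith
    obtain ⟨hlo, hhi⟩ := master n hn1 hL2
    rw [← hLdef] at hlo hhi hDdef
    have hDlo : LL ^ 2 / (2 * lam) - (1 / lam + C₀) ≤ D := by rw [hDdef]; linarith
    have hDhi : D ≤ Real.log (4 * LL ^ 2) + (LL ^ 2 + 2 * LL) / (2 * lam) + C₀ := by
      rw [hDdef]; linarith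
    have hlogpos : 0 ≤ Real.log (4 * LL ^ 2) := by
      apply Real.log_nonneg
      nlinarith
    have hεlo : -((2 + 2 * lam * C₀) / LL ^ 2) ≤ 2 * lam / LL ^ 2 * D - 1 := by
      have h1 := mul_le_mul_of_nonneg_left hDlo (by positivity : (0:ℝ) ≤ 2 * lam / LL ^ 2)
      have h2 : 2 * lam / LL ^ 2 * (LL ^ 2 / (2 * lam) - (1 / lam + C₀)) =
          1 - (2 + 2 * lam * C₀) / LL ^ 2 := by
        field_simp
      linarith
    have hεhi : 2 * lam / LL ^ 2 * D - 1 ≤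
        2 * lam * Real.log (4 * LL ^ 2) / LL ^ 2 + 2 / LL + (2 + 2 * lam * C₀) / LL ^ 2 := by
      have h1 := mul_le_mul_of_nonneg_left hDhi (by positivity : (0:ℝ) ≤ 2 * lam / LL ^ 2)
      have h2 : 2 * lam / LL ^ 2 * (Real.log (4 * LL ^ 2) + (LL ^ 2 + 2 * LL) / (2 * lam) + C₀) =
          2 * lam * Real.log (4 * LL ^ 2) / LL ^ 2 + 1 + 2 / LL + 2 * lam * C₀ / LL ^ 2 := by
        field_simp
        ring
      have h3 : 2 * lam * C₀ / LL ^ 2 ≤ (2 + 2 * lam * C₀) / LL ^ 2 := by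
        apply div_le_div_of_nonneg_right ?_ (by positivity)
        · linarith
      linarith
    rw [Real.norm_eq_abs, abs_le]
    constructor
    · have : 0 ≤ 2 * lam * Real.log (4 * LL ^ 2) / LL ^ 2 + 2 / LL := by positivity
      linarith
    · have : 0 ≤ (2 + 2 * lam * C₀) / LL ^ 2 := by positivity
      linarith
  · -- the two-sided bound, in fact equality with c = C = 1
    filter_upwards [hKplus.eventually_ge_atTop 2, eventually_ge_atTop 1] with n hL2 hn1
    set LL : ℝ := (Kplus n : ℝ) * (n : ℝ) ^ (-(1 : ℝ) / 8) with hLdef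
    set A : ℝ := (n : ℝ) ^ ((1 : ℝ) / 8) / LL with hAdef
    have hL0 : (0:ℝ) < LL := by linarith
    have hn0 : (0 : ℝ) < (n : ℝ) := by exact_mod_cast hn1
    have hApos : 0 < A := by
      rw [hAdef]
      exact div_pos (Real.rpow_pos_of_pos hn0 _) hL0
    have hexp : 1 / (2 * lam) * LL ^ 2 *
        (1 + (2 * lam / LL ^ 2 * (Real.log (R n) - Real.log A) - 1)) =
        Real.log (R n) - Real.log A := by
      field_simp
      ring
    have hkey : A * Real.exp (1 / (2 * lam) * LL ^ 2 *
        (1 + (2 * lam / LL ^ 2 * (Real.log (R n) - Real.log A) - 1))) = R n := by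
      rw [hexp, Real.exp_sub, Real.exp_log (hRpos n), Real.exp_log hApos]
      field_simp
    constructor
    · rw [one_mul, hkey]
    · rw [one_mul, hkey]
end
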